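/- Let ℋ and 𝒢_1,…,𝒢_m be real Hilbert spaces, let z ∈ ℋ, let f ∈ Γ₀(ℋ), and for every i ∈ {1,…,m} let r_i ∈ 𝒢_i, g_i ∈ Γ₀(𝒢_i), and L_i : ℋ → 𝒢_i be a bounded linear operator. Let 𝒦 = ℋ ⊕ 𝒢_1 ⊕ ⋯ ⊕ 𝒢_m and define the set-valued operator A : 𝒦 → 2^𝒦 by A(x, v_1,…,v_m) = ( ∂f(x) − z + Σ_{i=1}^m L_i^* v_i ) × ( −L_1 x + ∂g_1^*(v_1) + r_1 ) × ⋯ × ( −L_m x + ∂g_m^*(v_m) + r_m ). Then A is maximally monotone. -/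

import Mathlib

open scoped RealInnerProductSpace

noncomputable section

variable {E : Type*} [NormedAddCommGroup E] [InnerProductSpace ℝ E]

/-- The class Γ₀ : proper, lower semicontinuous, convex functions with values in ]-∞,+∞]. -/
def Gamma0 (f : E → EReal) : Prop :=
  (∃ x, f x ≠ ⊤) ∧ (∀ x, f x ≠ ⊥) ∧ LowerSemicontinuous f ∧
    ∀ x y : E, ∀ t : ℝ, 0 ≤ t → t ≤ 1 →
      f (t • x + (1 - t) • y) ≤ (t : EReal) * f x + ((1 - t : ℝ) : EReal) * f y

/-- The subdifferential of `f` at `x`. -/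
def subdiff (f : E → EReal) (x : E) : Set E :=
  {u | ∀ y, ((⟪y - x, u⟫ : ℝ) : EReal) + f x ≤ f y}

/-- The Fenchel conjugate of `f`. -/
def conj (f : E → EReal) (u : E) : EReal := ⨆ x, ((⟪x, u⟫ : ℝ) : EReal) - f x

lemma ne_top_of_subdiff {F : E → EReal} (hp : ∃ x, F x ≠ ⊤) {x u : E}
    (hu : u ∈ subdiff F x) : F x ≠ ⊤ := by
  obtain ⟨x0, hx0⟩ := hp
  intro h
  have h1 := hu x0
  rw [h, EReal.coe_add_top] at h1
  exact hx0 (top_le_iff.1 h1)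

lemma subdiff_mono {F : E → EReal} (hp : ∃ x, F x ≠ ⊤) (hb0 : ∀ x, F x ≠ ⊥) {x y a b : E}
    (ha : a ∈ subdiff F x) (hb : b ∈ subdiff F y) : 0 ≤ ⟪x - y, a - b⟫ := by
  have hxt : F x ≠ ⊤ := ne_top_of_subdiff hp ha
  have hyt : F y ≠ ⊤ := ne_top_of_subdiff hp hb
  set α := (F x).toReal with hα
  set β := (F y).toReal with hβ
  have hFx : F x = (α : EReal) := (EReal.coe_toReal hxt (hb0 x)).symm
  have hFy : F y = (β : EReal) := (EReal.coe_toReal hyt (hb0 y)).symm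
  have h1 := ha y
  rw [hFx, hFy, ← EReal.coe_add, EReal.coe_le_coe_iff] at h1
  have h2 := hb x
  rw [hFx, hFy, ← EReal.coe_add, EReal.coe_le_coe_iff] at h2
  have e1 : ⟪y - x, a⟫ = -⟪x - y, a⟫ := by rw [← neg_sub, inner_neg_left]
  have e2 : ⟪x - y, a - b⟫ = ⟪x - y, a⟫ - ⟪x - y, b⟫ := by rw [inner_sub_right]
  linarith [h1, h2, e1, e2]

lemma exists_minorant [CompleteSpace E] {F : E → EReal} (hF : Gamma0 F) :
    ∃ (u : E) (b : ℝ), ∀ x, ((⟪x, u⟫ + b : ℝ) : EReal) ≤ F x := by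
  obtain ⟨⟨x0, hx0⟩, hb0, hlsc, hconv⟩ := hF
  set S : Set (E × ℝ) := {p | F p.1 ≤ (p.2 : EReal)} with hS
  have hSconv : Convex ℝ S := by
    rintro ⟨x, s⟩ hxs ⟨y, t⟩ hyt a b ha hb hab
    simp only [hS, Set.mem_setOf_eq] at hxs hyt ⊢
    have hb' : b = 1 - a := by linarith
    subst hb'
    have h1 := hconv x y a ha (by linarith)
    refine le_trans h1 ?_
    have h2 : (a : EReal) * F x ≤ (a : EReal) * (s : EReal) :=
      mul_le_mul_of_nonneg_left hxs (by exact_mod_cast ha)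
    have h3 : ((1 - a : ℝ) : EReal) * F y ≤ ((1 - a : ℝ) : EReal) * (t : EReal) :=
      mul_le_mul_of_nonneg_left hyt (by exact_mod_cast hb)
    calc (a : EReal) * F x + ((1 - a : ℝ) : EReal) * F y
        ≤ (a : EReal) * (s : EReal) + ((1 - a : ℝ) : EReal) * (t : EReal) := add_le_add h2 h3
      _ = (((a • (x, s) + (1 - a) • (y, t) : E × ℝ).2 : ℝ) : EReal) := by
          simp only [Prod.smul_def, Prod.snd_add, Prod.smul_snd, smul_eq_mul,
            EReal.coe_add, EReal.coe_mul, EReal.coe_sub, EReal.coe_one]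
  have hSclosed : IsClosed S := by
    rw [← isOpen_compl_iff, isOpen_iff_mem_nhds]
    rintro ⟨x, t⟩ hp
    simp only [hS, Set.mem_compl_iff, Set.mem_setOf_eq, not_le] at hp
    obtain ⟨c, hc1, hc2⟩ := EReal.exists_between_coe_real hp
    have h1 : ∀ᶠ y in nhds x, (c : EReal) < F y := hlsc x (c : EReal) hc2
    have h2 : Set.Iio c ∈ nhds t := Iio_mem_nhds (by exact_mod_cast hc1)
    rw [nhds_prod_eq]
    filter_upwards [Filter.prod_mem_prod h1 h2] with q hq
    simp only [Set.mem_prod, Set.mem_Iio] at hq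
    simp only [Set.mem_compl_iff, hS, Set.mem_setOf_eq, not_le]
    exact lt_trans (by exact_mod_cast hq.2) hq.1
  set α0 : ℝ := (F x0).toReal with hα0
  have hFx0 : F x0 = (α0 : EReal) := (EReal.coe_toReal hx0 (hb0 x0)).symm
  have hpt : (x0, α0 - 1) ∉ S := by
    simp only [hS, Set.mem_setOf_eq, hFx0, not_le]
    exact_mod_cast sub_one_lt α0
  obtain ⟨φ, c, hφ1, hφ2⟩ := geometric_hahn_banach_point_closed hSconv hSclosed hpt
  set ψ : E →L[ℝ] ℝ := φ.comp (ContinuousLinearMap.inl ℝ E ℝ) with hψ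
  set a : ℝ := φ (0, 1) with haa
  have hsplit : ∀ x : E, ∀ t : ℝ, φ (x, t) = ψ x + t * a := by
    intro x t
    have : (x, t) = (x, (0:ℝ)) + t • ((0:E), (1:ℝ)) := by
      simp [Prod.ext_iff]
    rw [this, map_add, map_smul]
    simp [hψ, smul_eq_mul, haa]
  have hx0S : ((x0, α0) : E × ℝ) ∈ S := by simp [hS, hFx0]
  have ha : 0 < a := by
    have h1 : ψ x0 + (α0 - 1) * a < c := by rw [← hsplit]; exact hφ1
    have h2 : c < ψ x0 + α0 * a := by rw [← hsplit]; exact hφ2 _ hx0S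
    nlinarith
  set v : E := (InnerProductSpace.toDual ℝ E).symm ψ with hv
  refine ⟨-(a⁻¹ • v), c / a, fun x => ?_⟩
  by_cases hxT : F x = ⊤
  · rw [hxT]; exact le_top
  · have hFx : F x = (((F x).toReal : ℝ) : EReal) := (EReal.coe_toReal hxT (hb0 x)).symm
    have hxS : ((x, (F x).toReal) : E × ℝ) ∈ S := by
      simp only [hS, Set.mem_setOf_eq]
      exact EReal.le_coe_toReal hxT
    have h2 : c < ψ x + (F x).toReal * a := by rw [← hsplit]; exact hφ2 _ hxS
    have hinner : ⟪x, -(a⁻¹ • v)⟫ = -(a⁻¹ * ψ x) := by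
      rw [inner_neg_right, real_inner_smul_right]
      have : ⟪x, v⟫ = ψ x := by
        rw [real_inner_comm, hv]
        exact InnerProductSpace.toDual_symm_apply
      rw [this]
    rw [hFx, EReal.coe_le_coe_iff, hinner]
    have h3 : (c - ψ x) / a ≤ (F x).toReal := by
      rw [div_le_iff₀ ha]; nlinarith [h2]
    have heq : -(a⁻¹ * ψ x) + c / a = (c - ψ x) / a := by field_simp; ring
    rw [heq]; exact h3

lemma conj_ne_bot {g : E → EReal} (hg : Gamma0 g) (v : E) : conj g v ≠ ⊥ := by
  obtain ⟨x0, hx0⟩ := hg.1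
  have h1 : ((⟪x0, v⟫ : ℝ) : EReal) - g x0 ≠ ⊥ := by
    intro h
    rw [sub_eq_add_neg, EReal.add_eq_bot_iff] at h
    rcases h with h | h
    · exact EReal.coe_ne_bot _ h
    · exact hx0 (EReal.neg_eq_bot_iff.1 h)
  intro h
  exact h1 (eq_bot_iff.2 (h ▸ le_iSup (fun x => ((⟪x, v⟫ : ℝ) : EReal) - g x) x0))

lemma conj_gamma0 [CompleteSpace E] {g : E → EReal} (hg : Gamma0 g) : Gamma0 (conj g) := by
  refine ⟨?_, conj_ne_bot hg, ?_, ?_⟩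
  · obtain ⟨u, b, hub⟩ := exists_minorant hg
    refine ⟨u, ?_⟩
    have : conj g u ≤ ((-b : ℝ) : EReal) := by
      refine iSup_le fun x => ?_
      calc ((⟪x, u⟫ : ℝ) : EReal) - g x
          ≤ ((⟪x, u⟫ : ℝ) : EReal) - ((⟪x, u⟫ + b : ℝ) : EReal) :=
            EReal.sub_le_sub le_rfl (hub x)
        _ = ((-b : ℝ) : EReal) := by rw [← EReal.coe_sub]; norm_num
    exact fun h => by simp [h] at this
  · exact lowerSemicontinuous_iSup fun x => by
      by_cases hx : g x = ⊤
      · simp only [hx, EReal.sub_top]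
        exact lowerSemicontinuous_const
      · have : (fun v => ((⟪x, v⟫ : ℝ) : EReal) - g x)
            = fun v => (((⟪x, v⟫ - (g x).toReal : ℝ)) : EReal) := by
          funext v
          rw [EReal.coe_sub, EReal.coe_toReal hx (hg.2.1 x)]
        rw [this]
        exact (continuous_coe_real_ereal.comp
          ((continuous_const.inner continuous_id).sub continuous_const)).lowerSemicontinuous
  · intro u w t ht0 ht1
    refine iSup_le fun x => ?_
    by_cases hx : g x = ⊤
    · simp only [hx, EReal.sub_top]
      exact bot_le
    · have hxr : g x = (((g x).toReal : ℝ) : EReal) := (EReal.coe_toReal hx (hg.2.1 x)).symm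
      set s := (g x).toReal
      have hcombo : ⟪x, t • u + (1 - t) • w⟫ = t * ⟪x, u⟫ + (1 - t) * ⟪x, w⟫ := by
        rw [inner_add_right, real_inner_smul_right, real_inner_smul_right]
      have key : ((⟪x, t • u + (1 - t) • w⟫ : ℝ) : EReal) - g x
          = (t : EReal) * (((⟪x, u⟫ : ℝ) : EReal) - g x)
            + ((1 - t : ℝ) : EReal) * (((⟪x, w⟫ : ℝ) : EReal) - g x) := by
        rw [hxr, hcombo, ← EReal.coe_sub, ← EReal.coe_sub, ← EReal.coe_sub,
          ← EReal.coe_mul, ← EReal.coe_mul, ← EReal.coe_add]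
        norm_cast
        ring
      rw [key]
      refine add_le_add ?_ ?_
      · exact mul_le_mul_of_nonneg_left
          (le_iSup (fun x => ((⟪x, u⟫ : ℝ) : EReal) - g x) x) (by exact_mod_cast ht0)
      · exact mul_le_mul_of_nonneg_left
          (le_iSup (fun x => ((⟪x, w⟫ : ℝ) : EReal) - g x) x) (by exact_mod_cast (by linarith : (0:ℝ) ≤ 1 - t))

lemma prox_exists [CompleteSpace E] {F : E → EReal} (hF : Gamma0 F) {γ : ℝ} (hγ : 0 < γ)
    (x : E) : ∃ p, γ⁻¹ • (x - p) ∈ subdiff F p := by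
  obtain ⟨u0, b0, hmin⟩ := exists_minorant hF
  obtain ⟨⟨xp, hxp⟩, hnb, hlsc, hconv⟩ := hF
  set D : Set E := {y | F y ≠ ⊤} with hD
  set qd : E → ℝ := fun y => (2 * γ)⁻¹ * ‖y - x‖ ^ 2 with hqd
  set hr : E → ℝ := fun y => (F y).toReal + qd y with hhr
  have hγ2 : (0:ℝ) < (2 * γ)⁻¹ := by positivity
  have htR : ∀ y ∈ D, ⟪y, u0⟫ + b0 ≤ (F y).toReal := by
    intro y hy
    have h1 := hmin y
    rw [← EReal.coe_toReal hy (hnb y), EReal.coe_le_coe_iff] at h1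
    exact h1
  have hlow : ∀ y ∈ D, b0 - ‖u0‖ * ‖x‖ - γ / 2 * ‖u0‖ ^ 2 ≤ hr y := by
    intro y hy
    have h1 := htR y hy
    have h2 : -(‖y‖ * ‖u0‖) ≤ ⟪y, u0⟫ := by
      have := abs_real_inner_le_norm y u0
      have := neg_abs_le (⟪y, u0⟫ : ℝ)
      linarith
    have h3 : ‖y‖ ≤ ‖y - x‖ + ‖x‖ := by simpa using norm_add_le (y - x) x
    have h4 : (0:ℝ) ≤ ‖u0‖ := norm_nonneg _
    have h5 : (0:ℝ) ≤ ‖y - x‖ := norm_nonneg _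
    have h6 : (2*γ)⁻¹ * (‖y - x‖ - γ * ‖u0‖)^2 ≥ 0 := by positivity
    have h7 : (2*γ)⁻¹ * (2*γ) = 1 := by field_simp
    simp only [hhr, hqd]
    nlinarith [h1, h2, h3, h6, mul_le_mul_of_nonneg_right h3 h4]
  have hbdd : BddBelow (hr '' D) := by
    refine ⟨b0 - ‖u0‖ * ‖x‖ - γ / 2 * ‖u0‖ ^ 2, ?_⟩
    rintro _ ⟨y, hy, rfl⟩
    exact hlow y hy
  have hDne : (hr '' D).Nonempty := ⟨hr xp, xp, hxp, rfl⟩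
  set mR := sInf (hr '' D) with hmR
  have hmem : ∀ y ∈ D, mR ≤ hr y := fun y hy => csInf_le hbdd ⟨y, hy, rfl⟩
  have hseq : ∀ n : ℕ, ∃ y, y ∈ D ∧ hr y < mR + 1 / (n + 1) := by
    intro n
    have h1 : mR < mR + 1 / (n + 1) := by
      have : (0:ℝ) < 1 / (n+1) := by positivity
      linarith
    obtain ⟨_, ⟨y, hy, rfl⟩, hlt⟩ := (csInf_lt_iff hbdd hDne).1 h1
    exact ⟨y, hy, hlt⟩
  choose y hyD hy using hseq
  -- half convexity in real terms
  have hhalf : ∀ a b : E, a ∈ D → b ∈ D → ((1/2 : ℝ) • a + (1/2 : ℝ) • b) ∈ D ∧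
      (F (((1/2 : ℝ) • a + (1/2 : ℝ) • b))).toReal ≤ 1/2 * (F a).toReal + 1/2 * (F b).toReal := by
    intro a b ha hb
    have h1 := hconv a b (1/2) (by norm_num) (by norm_num)
    have heq : (1/2 : ℝ) • a + (1 - 1/2 : ℝ) • b = ((1/2 : ℝ) • a + (1/2 : ℝ) • b) := by
      norm_num
    rw [heq] at h1
    rw [← EReal.coe_toReal ha (hnb a), ← EReal.coe_toReal hb (hnb b)] at h1
    have h2 : ((1/2 : ℝ) : EReal) * ((F a).toReal : EReal)
        + ((1 - 1/2 : ℝ) : EReal) * ((F b).toReal : EReal)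
        = ((1/2 * (F a).toReal + 1/2 * (F b).toReal : ℝ) : EReal) := by
      rw [← EReal.coe_mul, ← EReal.coe_mul, ← EReal.coe_add]; norm_num
    rw [h2] at h1
    have hmT : F (((1/2 : ℝ) • a + (1/2 : ℝ) • b)) ≠ ⊤ := fun h => by
      rw [h] at h1; exact (EReal.coe_ne_top _) (top_le_iff.1 h1)
    refine ⟨hmT, ?_⟩
    rw [← EReal.coe_toReal hmT (hnb _), EReal.coe_le_coe_iff] at h1
    exact h1
  -- Cauchy estimate
  have hkey : ∀ n k : ℕ, ‖y n - y k‖ ^ 2 ≤ 4 * γ * (1/(n+1) + 1/(k+1)) := by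
    intro n k
    obtain ⟨hmD, hmle⟩ := hhalf (y n) (y k) (hyD n) (hyD k)
    have h0 : mR ≤ hr (((1/2 : ℝ) • y n + (1/2 : ℝ) • y k)) := hmem _ hmD
    have h1 := hy n
    have h2 := hy k
    have hpar : ‖((1/2 : ℝ) • y n + (1/2 : ℝ) • y k) - x‖ ^ 2
        = 1/2 * ‖y n - x‖^2 + 1/2 * ‖y k - x‖^2 - 1/4 * ‖y n - y k‖^2 := by
      have e1 : ((1/2 : ℝ) • y n + (1/2 : ℝ) • y k) - x = (1/2 : ℝ) • ((y n - x) + (y k - x)) := by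
        module
      have e2 : y n - y k = (y n - x) - (y k - x) := by abel
      have hn12 : ‖(1/2 : ℝ)‖ = 1/2 := by rw [Real.norm_eq_abs]; norm_num
      rw [e1, e2, norm_smul, hn12, mul_pow,
        norm_add_sq_real ((y n) - x) ((y k) - x), norm_sub_sq_real ((y n) - x) ((y k) - x)]
      ring
    simp only [hhr, hqd] at h0 h1 h2 hmle
    rw [hpar] at h0
    have hN : (2*γ)⁻¹ * ‖y n - y k‖^2 ≤ 2*(1/(n+1) + 1/(k+1)) := by linarith
    have h8 : ‖y n - y k‖^2 = 2*γ*((2*γ)⁻¹*‖y n - y k‖^2) := by field_simp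
    rw [h8]
    have h9 := mul_le_mul_of_nonneg_left hN (by positivity : (0:ℝ) ≤ 2*γ)
    linarith
  have hcauchy : CauchySeq y := by
    apply cauchySeq_of_le_tendsto_0 (fun N : ℕ => Real.sqrt (8*γ*(1/(N+1))))
    · intro n k N hn hk
      have e1 : 1/((n:ℝ)+1) ≤ 1/((N:ℝ)+1) := by
        apply one_div_le_one_div_of_le (by positivity)
        have : (N:ℝ) ≤ (n:ℝ) := by exact_mod_cast hn
        linarith
      have e2 : 1/((k:ℝ)+1) ≤ 1/((N:ℝ)+1) := by
        apply one_div_le_one_div_of_le (by positivity)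
        have : (N:ℝ) ≤ (k:ℝ) := by exact_mod_cast hk
        linarith
      have h1 : ‖y n - y k‖^2 ≤ 8*γ*(1/(N+1)) := by
        have h2 := hkey n k
        have h3 := mul_le_mul_of_nonneg_left (add_le_add e1 e2) (by positivity : (0:ℝ) ≤ 4*γ)
        calc ‖y n - y k‖^2 ≤ 4*γ*(1/(n+1) + 1/(k+1)) := h2
          _ ≤ 4*γ*(1/((N:ℝ)+1) + 1/((N:ℝ)+1)) := h3
          _ = 8*γ*(1/(N+1)) := by ring
      rw [dist_eq_norm]
      have h4 : ‖y n - y k‖ = Real.sqrt (‖y n - y k‖^2) := (Real.sqrt_sq (norm_nonneg _)).symm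
      rw [h4]
      exact Real.sqrt_le_sqrt h1
    · have h2 : Filter.Tendsto (fun N : ℕ => 8*γ*(1/((N:ℝ)+1))) Filter.atTop (nhds 0) := by
        simpa using tendsto_one_div_add_atTop_nhds_zero_nat.const_mul (8*γ)
      have h3 := (Real.continuous_sqrt.tendsto 0).comp h2
      simpa [Function.comp_def] using h3
  obtain ⟨p, hp⟩ := cauchySeq_tendsto_of_complete hcauchy
  have hq_cont : Filter.Tendsto (fun n => qd (y n)) Filter.atTop (nhds (qd p)) := by
    have hc : Continuous qd := by
      simp only [hqd]
      fun_prop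
    exact (hc.tendsto p).comp hp
  have hFple : F p ≤ ((mR - qd p : ℝ) : EReal) := by
    by_contra hcon
    push_neg at hcon
    obtain ⟨c, hc1, hc2⟩ := EReal.exists_between_coe_real hcon
    have hev : ∀ᶠ n in Filter.atTop, (c : EReal) < F (y n) := hp.eventually (hlsc p _ hc2)
    have hev2 : (fun n => c + qd (y n)) ≤ᶠ[Filter.atTop] (fun n : ℕ => mR + 1/((n:ℝ)+1)) := by
      filter_upwards [hev] with n hn
      have h5 : c ≤ (F (y n)).toReal := by
        rw [← EReal.coe_toReal (hyD n) (hnb _), EReal.coe_lt_coe_iff] at hn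
        linarith
      have h6 := hy n
      simp only [hhr] at h6
      linarith
    have hlim1 : Filter.Tendsto (fun n => c + qd (y n)) Filter.atTop (nhds (c + qd p)) :=
      tendsto_const_nhds.add hq_cont
    have hlim2 : Filter.Tendsto (fun n : ℕ => mR + 1/((n:ℝ)+1)) Filter.atTop (nhds mR) := by
      simpa using (tendsto_const_nhds : Filter.Tendsto (fun _ : ℕ => mR) Filter.atTop (nhds mR)).add
        tendsto_one_div_add_atTop_nhds_zero_nat
    have h7 := le_of_tendsto_of_tendsto hlim1 hlim2 hev2
    rw [EReal.coe_lt_coe_iff] at hc1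
    linarith
  have hpT : F p ≠ ⊤ := fun h => by rw [h] at hFple; exact (EReal.coe_ne_top _) (top_le_iff.1 hFple)
  have hpval : (F p).toReal ≤ mR - qd p := by
    rw [← EReal.coe_toReal hpT (hnb p), EReal.coe_le_coe_iff] at hFple
    exact hFple
  have hminp : ∀ w, w ∈ D → (F p).toReal + qd p ≤ (F w).toReal + qd w := by
    intro w hw
    have := hmem w hw
    simp only [hhr] at this
    linarith
  refine ⟨p, fun w => ?_⟩
  by_cases hwT : F w = ⊤
  · rw [hwT]; exact le_top
  · set α := (F p).toReal with hαd
    set β := (F w).toReal with hβd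
    rw [← EReal.coe_toReal hwT (hnb w), ← EReal.coe_toReal hpT (hnb p), ← hαd, ← hβd,
      ← EReal.coe_add, EReal.coe_le_coe_iff]
    have key : ∀ t : ℝ, 0 < t → t ≤ 1 →
        α - β ≤ γ⁻¹*⟪p - x, w - p⟫ + t*((2*γ)⁻¹*‖w - p‖^2) := by
      intro t ht0 ht1
      have hz := hconv w p t ht0.le ht1
      set zt := t • w + (1-t) • p with hzt
      rw [← EReal.coe_toReal hwT (hnb w), ← EReal.coe_toReal hpT (hnb p), ← hαd, ← hβd] at hz
      have h2 : (t : EReal) * (β : EReal) + ((1-t : ℝ) : EReal) * (α : EReal)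
          = ((t*β+(1-t)*α : ℝ) : EReal) := by
        rw [← EReal.coe_mul, ← EReal.coe_mul, ← EReal.coe_add]
      rw [h2] at hz
      have hzT : F zt ≠ ⊤ := fun h => by rw [h] at hz; exact (EReal.coe_ne_top _) (top_le_iff.1 hz)
      have hzle : (F zt).toReal ≤ t*β+(1-t)*α := by
        rw [← EReal.coe_toReal hzT (hnb _), EReal.coe_le_coe_iff] at hz
        exact hz
      have hq : ‖zt - x‖^2 = ‖p - x‖^2 + 2*t*⟪p - x, w - p⟫ + t^2*‖w - p‖^2 := by
        have e1 : zt - x = (p - x) + t • (w - p) := by rw [hzt]; module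
        rw [e1, norm_add_sq_real, real_inner_smul_right, norm_smul, Real.norm_eq_abs,
          abs_of_pos ht0, mul_pow]
        ring
      have h3 := hminp zt hzT
      simp only [hqd] at h3
      rw [hq] at h3
      have hinv : 2*(2*γ)⁻¹ = γ⁻¹ := by rw [mul_inv]; ring
      have h4 : t*(α - β) ≤ t*(γ⁻¹*⟪p - x, w - p⟫ + t*((2*γ)⁻¹*‖w - p‖^2)) := by
        rw [← hinv]
        nlinarith [h3, hzle]
      exact le_of_mul_le_mul_left h4 ht0
    have hK : (0:ℝ) ≤ (2*γ)⁻¹*‖w - p‖^2 := by positivity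
    have hαβ : α - β ≤ γ⁻¹*⟪p - x, w - p⟫ := by
      refine le_of_forall_pos_le_add fun ε hε => ?_
      set K := (2*γ)⁻¹*‖w - p‖^2 with hKd
      set t := min 1 (ε/(K+1)) with htd
      have ht0 : 0 < t := lt_min one_pos (by positivity)
      have ht1 : t ≤ 1 := min_le_left _ _
      have htK : t*K ≤ ε := by
        have h5 : t ≤ ε/(K+1) := min_le_right _ _
        have h6 : t*K ≤ (ε/(K+1))*K := mul_le_mul_of_nonneg_right h5 hK
        have h7 : (ε/(K+1))*K ≤ ε := by
          rw [div_mul_eq_mul_div, div_le_iff₀ (by linarith : (0:ℝ) < K+1)]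
          nlinarith
        linarith
      have := key t ht0 ht1
      linarith
    have e : ⟪w - p, γ⁻¹ • (x - p)⟫ = γ⁻¹ * ⟪x - p, w - p⟫ := by
      rw [real_inner_smul_right, real_inner_comm]
    have e2 : ⟪p - x, w - p⟫ = -⟪x - p, w - p⟫ := by
      rw [← neg_sub, inner_neg_left]
    rw [e]
    have e3 : γ⁻¹ * ⟪p - x, w - p⟫ = -(γ⁻¹ * ⟪x - p, w - p⟫) := by rw [e2]; ring
    linarith [hαβ, e3.symm.le, e3.le]

lemma prox_fun [CompleteSpace E] {F : E → EReal} (hF : Gamma0 F) {γ : ℝ} (hγ : 0 < γ) :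
    ∃ P : E → E, (∀ x, γ⁻¹ • (x - P x) ∈ subdiff F (P x)) ∧
      ∀ a b, ‖P a - P b‖ ≤ ‖a - b‖ := by
  choose P hP using prox_exists hF hγ
  refine ⟨P, hP, fun a b => ?_⟩
  have h1 := subdiff_mono hF.1 hF.2.1 (hP a) (hP b)
  have h2 : ⟪P a - P b, γ⁻¹ • (a - P a) - γ⁻¹ • (b - P b)⟫
      = γ⁻¹ * (⟪P a - P b, a - b⟫ - ‖P a - P b‖^2) := by
    rw [← smul_sub, real_inner_smul_right]
    have e : (a - P a) - (b - P b) = (a - b) - (P a - P b) := by abel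
    rw [e, inner_sub_right, real_inner_self_eq_norm_sq]
  rw [h2] at h1
  have hγi : (0:ℝ) < γ⁻¹ := by positivity
  have h3 : ‖P a - P b‖^2 ≤ ⟪P a - P b, a - b⟫ := by nlinarith
  have h4 : ⟪P a - P b, a - b⟫ ≤ ‖P a - P b‖ * ‖a - b‖ := real_inner_le_norm _ _
  rcases eq_or_lt_of_le (norm_nonneg (P a - P b)) with h5 | h5
  · rw [← h5]; exact norm_nonneg _
  · have h6 : ‖P a - P b‖ * ‖P a - P b‖ ≤ ‖P a - P b‖ * ‖a - b‖ := by nlinarith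
    exact le_of_mul_le_mul_left h6 h5


lemma contraction_estimate {H : Type*} [NormedAddCommGroup H] [InnerProductSpace ℝ H]
    [CompleteSpace H] {m : ℕ} {G : Fin m → Type*} [∀ i, NormedAddCommGroup (G i)]
    [∀ i, InnerProductSpace ℝ (G i)] [∀ i, CompleteSpace (G i)]
    (L : ∀ i, H →L[ℝ] G i) (γ : ℝ) (d1 : H) (d2 : ∀ i, G i) :
    ‖(1-γ) • d1 - γ • ∑ i, ContinuousLinearMap.adjoint (L i) (d2 i)‖^2
      + ∑ i, ‖(1-γ) • d2 i + γ • L i d1‖^2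
    ≤ ((1-γ)^2 + γ^2 * (∑ i, ‖L i‖^2)) * (‖d1‖^2 + ∑ i, ‖d2 i‖^2) := by
  set S := ∑ i, ContinuousLinearMap.adjoint (L i) (d2 i) with hS
  have e1 : ‖(1-γ) • d1 - γ • S‖^2
      = (1-γ)^2*‖d1‖^2 - 2*((1-γ)*γ)*⟪d1, S⟫ + γ^2*‖S‖^2 := by
    rw [norm_sub_sq_real, norm_smul, norm_smul, real_inner_smul_left, real_inner_smul_right,
      mul_pow, mul_pow, Real.norm_eq_abs, Real.norm_eq_abs, sq_abs, sq_abs]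
    ring
  have e2 : ∀ i, ‖(1-γ) • d2 i + γ • L i d1‖^2
      = (1-γ)^2*‖d2 i‖^2 + 2*((1-γ)*γ)*⟪d2 i, L i d1⟫ + γ^2*‖L i d1‖^2 := by
    intro i
    rw [norm_add_sq_real, norm_smul, norm_smul, real_inner_smul_left, real_inner_smul_right,
      mul_pow, mul_pow, Real.norm_eq_abs, Real.norm_eq_abs, sq_abs, sq_abs]
    ring
  have e3 : ⟪d1, S⟫ = ∑ i, ⟪d2 i, L i d1⟫ := by
    rw [hS, inner_sum]
    exact Finset.sum_congr rfl fun i _ => by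
      rw [ContinuousLinearMap.adjoint_inner_right]; exact real_inner_comm _ _
  have e2' : ∑ i, ‖(1-γ) • d2 i + γ • L i d1‖^2
      = (1-γ)^2 * (∑ i, ‖d2 i‖^2) + 2*((1-γ)*γ) * (∑ i, ⟪d2 i, L i d1⟫)
        + γ^2 * (∑ i, ‖L i d1‖^2) := by
    rw [Finset.mul_sum, Finset.mul_sum, Finset.mul_sum, ← Finset.sum_add_distrib,
      ← Finset.sum_add_distrib]
    exact Finset.sum_congr rfl fun i _ => e2 i
  have hd2 : (0:ℝ) ≤ ∑ i, ‖d2 i‖^2 := Finset.sum_nonneg fun i _ => sq_nonneg _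
  have b1 : ‖S‖^2 ≤ (∑ i, ‖L i‖^2) * (∑ i, ‖d2 i‖^2) := by
    have h1 : ‖S‖ ≤ ∑ i, ‖L i‖*‖d2 i‖ := by
      refine (norm_sum_le _ _).trans (Finset.sum_le_sum fun i _ => ?_)
      calc ‖ContinuousLinearMap.adjoint (L i) (d2 i)‖
          ≤ ‖ContinuousLinearMap.adjoint (L i)‖ * ‖d2 i‖ :=
            ContinuousLinearMap.le_opNorm _ _
        _ = ‖L i‖ * ‖d2 i‖ := by
            rw [LinearIsometryEquiv.norm_map (ContinuousLinearMap.adjoint :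
              (H →L[ℝ] G i) ≃ₗᵢ⋆[ℝ] (G i →L[ℝ] H)) (L i)]
    have h2 : (∑ i, ‖L i‖*‖d2 i‖)^2 ≤ (∑ i, ‖L i‖^2)*(∑ i, ‖d2 i‖^2) :=
      Finset.sum_mul_sq_le_sq_mul_sq _ _ _
    have h3 : (0:ℝ) ≤ ∑ i, ‖L i‖*‖d2 i‖ :=
      Finset.sum_nonneg fun i _ => mul_nonneg (norm_nonneg _) (norm_nonneg _)
    nlinarith [norm_nonneg S]
  have b2 : ∑ i, ‖L i d1‖^2 ≤ (∑ i, ‖L i‖^2) * ‖d1‖^2 := by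
    rw [Finset.sum_mul]
    refine Finset.sum_le_sum fun i _ => ?_
    have h4 := (L i).le_opNorm d1
    nlinarith [norm_nonneg (L i d1), norm_nonneg d1, norm_nonneg (L i)]
  rw [e1, e2', e3]
  nlinarith [b1, b2, sq_nonneg γ]

lemma auxCompleteK {H : Type*} [NormedAddCommGroup H] [InnerProductSpace ℝ H] [CompleteSpace H]
    {m : ℕ} {G : Fin m → Type*} [∀ i, NormedAddCommGroup (G i)] [∀ i, InnerProductSpace ℝ (G i)]
    [∀ i, CompleteSpace (G i)] : CompleteSpace (WithLp 2 (H × PiLp 2 G)) := by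
  exact inferInstance

set_option maxHeartbeats 1000000 in
set_option synthInstance.maxHeartbeats 400000 in
/-- On `𝒦 = ℋ ⊕ 𝒢₁ ⊕ ⋯ ⊕ 𝒢ₘ`, the operator
`A(x,v) = (∂f(x) − z + Σᵢ Lᵢ* vᵢ) × ∏ᵢ (−Lᵢ x + ∂gᵢ*(vᵢ) + rᵢ)`
is maximally monotone (for the direct-sum scalar product). -/
theorem statement4
    {H : Type*} [NormedAddCommGroup H] [InnerProductSpace ℝ H] [CompleteSpace H]
    {m : ℕ} (hm : 0 < m)
    {G : Fin m → Type*} [∀ i, NormedAddCommGroup (G i)] [∀ i, InnerProductSpace ℝ (G i)]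
    [∀ i, CompleteSpace (G i)]
    (z : H) (f : H → EReal) (hf : Gamma0 f)
    (r : ∀ i, G i) (g : ∀ i, G i → EReal) (hg : ∀ i, Gamma0 (g i))
    (L : ∀ i, H →L[ℝ] G i)
    (A : (H × ∀ i, G i) → Set (H × ∀ i, G i))
    (hA : ∀ p q : H × ∀ i, G i, q ∈ A p ↔
      (q.1 - ∑ i, ContinuousLinearMap.adjoint (L i) (p.2 i) + z ∈ subdiff f p.1) ∧
      ∀ i, q.2 i + L i p.1 - r i ∈ subdiff (conj (g i)) (p.2 i)) :
    -- A is monotone …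
    ((∀ p q u v : H × ∀ i, G i, u ∈ A p → v ∈ A q →
        0 ≤ ⟪p.1 - q.1, u.1 - v.1⟫ + ∑ i, ⟪p.2 i - q.2 i, u.2 i - v.2 i⟫)) ∧
    -- … and maximally monotone
    (∀ A' : (H × ∀ i, G i) → Set (H × ∀ i, G i),
      (∀ p q u v : H × ∀ i, G i, u ∈ A' p → v ∈ A' q →
        0 ≤ ⟪p.1 - q.1, u.1 - v.1⟫ + ∑ i, ⟪p.2 i - q.2 i, u.2 i - v.2 i⟫) →
      (∀ p, A p ⊆ A' p) → A = A') := by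
  have hgc : ∀ i, Gamma0 (conj (g i)) := fun i => conj_gamma0 (hg i)
  have mono : ∀ p q u v : H × ∀ i, G i, u ∈ A p → v ∈ A q →
      0 ≤ ⟪p.1 - q.1, u.1 - v.1⟫ + ∑ i, ⟪p.2 i - q.2 i, u.2 i - v.2 i⟫ := by
    intro p q u v hu hv
    rw [hA] at hu hv
    obtain ⟨hu1, hu2⟩ := hu
    obtain ⟨hv1, hv2⟩ := hv
    have h1 := subdiff_mono hf.1 hf.2.1 hu1 hv1
    have e1 : (u.1 - ∑ i, ContinuousLinearMap.adjoint (L i) (p.2 i) + z)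
        - (v.1 - ∑ i, ContinuousLinearMap.adjoint (L i) (q.2 i) + z)
        = (u.1 - v.1) - ∑ i, ContinuousLinearMap.adjoint (L i) (p.2 i - q.2 i) := by
      rw [Finset.sum_congr rfl
        (fun i _ => map_sub (ContinuousLinearMap.adjoint (L i)) (p.2 i) (q.2 i)),
        Finset.sum_sub_distrib]
      abel
    rw [e1, inner_sub_right, inner_sum] at h1
    have e2 : ∀ i, ⟪p.1 - q.1, ContinuousLinearMap.adjoint (L i) (p.2 i - q.2 i)⟫
        = ⟪p.2 i - q.2 i, L i (p.1 - q.1)⟫ := fun i => by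
      rw [ContinuousLinearMap.adjoint_inner_right]; exact real_inner_comm _ _
    rw [Finset.sum_congr rfl (fun i _ => e2 i)] at h1
    have h2 : ∀ i, 0 ≤ ⟪p.2 i - q.2 i, u.2 i - v.2 i⟫ + ⟪p.2 i - q.2 i, L i (p.1 - q.1)⟫ := by
      intro i
      have h3 := subdiff_mono (hgc i).1 (hgc i).2.1 (hu2 i) (hv2 i)
      have e3 : (u.2 i + L i p.1 - r i) - (v.2 i + L i q.1 - r i)
          = (u.2 i - v.2 i) + L i (p.1 - q.1) := by rw [map_sub]; abel
      rwa [e3, inner_add_right] at h3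
    have h4 := Finset.sum_nonneg (fun i (_ : i ∈ Finset.univ) => h2 i)
    rw [Finset.sum_add_distrib] at h4
    linarith
  refine ⟨mono, ?_⟩
  intro A' hA' hsub
  classical
  set Csq : ℝ := ∑ i, ‖L i‖^2 with hCsqdef
  have hCsq0 : (0:ℝ) ≤ Csq := Finset.sum_nonneg fun i _ => sq_nonneg _
  set γ : ℝ := (1 + Csq)⁻¹ with hγdef
  have hγ : 0 < γ := by rw [hγdef]; positivity
  have hγ1 : γ ≤ 1 := by
    rw [hγdef]
    rw [inv_le_one_iff₀]
    right; linarith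
  obtain ⟨Pf, hPf, hPfl⟩ := prox_fun hf hγ
  have hproxg : ∀ i, ∃ P : G i → G i, (∀ x, γ⁻¹ • (x - P x) ∈ subdiff (conj (g i)) (P x))
      ∧ ∀ a b, ‖P a - P b‖ ≤ ‖a - b‖ := fun i => prox_fun (hgc i) hγ
  choose Pg hPg hPgl using hproxg
  have hcontr : (1-γ)^2 + γ^2 * Csq = 1 - γ := by
    have h1 : γ * (1 + Csq) = 1 := by
      rw [hγdef]; field_simp
    nlinarith
  have surj : ∀ w : H × (∀ i, G i), ∃ q : H × (∀ i, G i),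
      ((w.1 - q.1, fun i => w.2 i - q.2 i) : H × (∀ i, G i)) ∈ A q := by
    intro w
    haveI : CompleteSpace (WithLp 2 (H × PiLp 2 G)) := auxCompleteK
    set T : WithLp 2 (H × PiLp 2 G) → WithLp 2 (H × PiLp 2 G) := fun k =>
      WithLp.toLp 2 (Pf (k.fst + γ • (w.1 - k.fst - ∑ i, ContinuousLinearMap.adjoint (L i) (k.snd i) + z)),
       (WithLp.toLp 2 fun i => Pg i (k.snd i + γ • (w.2 i - k.snd i + L i k.fst - r i)) : PiLp 2 G)) with hT
    have hTlip : ∀ k k' : WithLp 2 (H × PiLp 2 G),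
        dist (T k) (T k') ≤ Real.sqrt (1-γ) * dist k k' := by
      intro k k'
      have hd1 : dist (T k) (T k') ^ 2
          = ‖(T k).fst - (T k').fst‖^2 + ∑ i, ‖(T k).snd i - (T k').snd i‖^2 := by
        rw [dist_eq_norm, WithLp.prod_norm_sq_eq_of_L2, PiLp.norm_sq_eq_of_L2]
        rfl
      have hd2 : dist k k' ^ 2 = ‖k.fst - k'.fst‖^2 + ∑ i, ‖k.snd i - k'.snd i‖^2 := by
        rw [dist_eq_norm, WithLp.prod_norm_sq_eq_of_L2, PiLp.norm_sq_eq_of_L2]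
        rfl
      have ea : (k.fst + γ • (w.1 - k.fst - ∑ i, ContinuousLinearMap.adjoint (L i) (k.snd i) + z))
          - (k'.fst + γ • (w.1 - k'.fst - ∑ i, ContinuousLinearMap.adjoint (L i) (k'.snd i) + z))
          = (1-γ) • (k.fst - k'.fst)
            - γ • ∑ i, ContinuousLinearMap.adjoint (L i) (k.snd i - k'.snd i) := by
        rw [Finset.sum_congr rfl
          (fun i _ => map_sub (ContinuousLinearMap.adjoint (L i)) (k.snd i) (k'.snd i)),
          Finset.sum_sub_distrib]
        module
      have eb : ∀ i, (k.snd i + γ • (w.2 i - k.snd i + L i k.fst - r i))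
          - (k'.snd i + γ • (w.2 i - k'.snd i + L i k'.fst - r i))
          = (1-γ) • (k.snd i - k'.snd i) + γ • L i (k.fst - k'.fst) := by
        intro i
        rw [map_sub]
        module
      have h5 : ‖(T k).fst - (T k').fst‖^2
          ≤ ‖(1-γ) • (k.fst - k'.fst)
              - γ • ∑ i, ContinuousLinearMap.adjoint (L i) (k.snd i - k'.snd i)‖^2 := by
        rw [← ea]
        exact pow_le_pow_left₀ (norm_nonneg _) (hPfl _ _) 2
      have h6 : ∀ i, ‖(T k).snd i - (T k').snd i‖^2
          ≤ ‖(1-γ) • (k.snd i - k'.snd i) + γ • L i (k.fst - k'.fst)‖^2 := by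
        intro i
        rw [← eb i]
        exact pow_le_pow_left₀ (norm_nonneg _) (hPgl i _ _) 2
      have h7 := contraction_estimate L γ (k.fst - k'.fst) (fun i => k.snd i - k'.snd i)
      rw [hcontr] at h7
      have h8 : dist (T k) (T k') ^ 2 ≤ (1-γ) * dist k k' ^ 2 := by
        rw [hd1, hd2]
        have h9 := Finset.sum_le_sum (fun i (_ : i ∈ Finset.univ) => h6 i)
        calc ‖(T k).fst - (T k').fst‖^2 + ∑ i, ‖(T k).snd i - (T k').snd i‖^2
            ≤ ‖(1-γ) • (k.fst - k'.fst)
                - γ • ∑ i, ContinuousLinearMap.adjoint (L i) (k.snd i - k'.snd i)‖^2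
              + ∑ i, ‖(1-γ) • (k.snd i - k'.snd i) + γ • L i (k.fst - k'.fst)‖^2 :=
              add_le_add h5 h9
          _ ≤ (1-γ) * (‖k.fst - k'.fst‖^2 + ∑ i, ‖k.snd i - k'.snd i‖^2) := h7
      calc dist (T k) (T k') = Real.sqrt (dist (T k) (T k') ^ 2) :=
            (Real.sqrt_sq dist_nonneg).symm
        _ ≤ Real.sqrt ((1-γ) * dist k k' ^ 2) := Real.sqrt_le_sqrt h8
        _ = Real.sqrt (1-γ) * dist k k' := by
            rw [Real.sqrt_mul (by linarith), Real.sqrt_sq dist_nonneg]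
    have hKlt : Real.toNNReal (Real.sqrt (1-γ)) < 1 := by
      rw [← NNReal.coe_lt_coe, Real.coe_toNNReal _ (Real.sqrt_nonneg _), NNReal.coe_one]
      calc Real.sqrt (1-γ) < Real.sqrt 1 := by
            apply Real.sqrt_lt_sqrt (by linarith)
            linarith
        _ = 1 := Real.sqrt_one
    have hC : ContractingWith (Real.toNNReal (Real.sqrt (1-γ))) T := by
      constructor
      · exact hKlt
      · apply LipschitzWith.of_dist_le_mul
        intro k k'
        rw [Real.coe_toNNReal _ (Real.sqrt_nonneg _)]
        exact hTlip k k'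
    obtain ⟨q, hq, -, -⟩ := hC.exists_fixedPoint 0 (edist_ne_top _ _)
    have hq1 : Pf (q.fst + γ • (w.1 - q.fst - ∑ i, ContinuousLinearMap.adjoint (L i) (q.snd i) + z))
        = q.fst := congrArg WithLp.fst hq
    have hq2 : ∀ i, Pg i (q.snd i + γ • (w.2 i - q.snd i + L i q.fst - r i)) = q.snd i :=
      fun i => congrArg (fun x => x.snd i) hq
    refine ⟨(q.fst, fun i => q.snd i), ?_⟩
    rw [hA]
    constructor
    · have h10 := hPf (q.fst + γ • (w.1 - q.fst - ∑ i, ContinuousLinearMap.adjoint (L i) (q.snd i) + z))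
      rw [hq1] at h10
      have e4 : γ⁻¹ • ((q.fst + γ • (w.1 - q.fst - ∑ i, ContinuousLinearMap.adjoint (L i) (q.snd i) + z))
          - q.fst) = w.1 - q.fst - ∑ i, ContinuousLinearMap.adjoint (L i) (q.snd i) + z := by
        rw [add_sub_cancel_left, smul_smul, inv_mul_cancel₀ hγ.ne', one_smul]
      rw [e4] at h10
      simpa using h10
    · intro i
      have h10 := hPg i (q.snd i + γ • (w.2 i - q.snd i + L i q.fst - r i))
      rw [hq2 i] at h10
      have e4 : γ⁻¹ • ((q.snd i + γ • (w.2 i - q.snd i + L i q.fst - r i)) - q.snd i)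
          = w.2 i - q.snd i + L i q.fst - r i := by
        rw [add_sub_cancel_left, smul_smul, inv_mul_cancel₀ hγ.ne', one_smul]
      rw [e4] at h10
      simpa using h10
  have hsup : ∀ p, A' p ⊆ A p := by
    intro p u hu
    obtain ⟨q, hq⟩ := surj (p.1 + u.1, fun i => p.2 i + u.2 i)
    have hq' : ((p.1 + u.1 - q.1, fun i => p.2 i + u.2 i - q.2 i) : H × (∀ i, G i)) ∈ A q := hq
    have hv' := hsub q hq'
    have h0 : (0:ℝ) ≤ ⟪p.1 - q.1, u.1 - (p.1 + u.1 - q.1)⟫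
        + ∑ i, ⟪p.2 i - q.2 i, u.2 i - (p.2 i + u.2 i - q.2 i)⟫ :=
      hA' p q u (p.1 + u.1 - q.1, fun i => p.2 i + u.2 i - q.2 i) hu hv'
    have h1 : ⟪p.1 - q.1, u.1 - (p.1 + u.1 - q.1)⟫ = -‖p.1 - q.1‖^2 := by
      have e2 : u.1 - (p.1 + u.1 - q.1) = -(p.1 - q.1) := by abel
      rw [e2, inner_neg_right, real_inner_self_eq_norm_sq]
    have h2 : ∀ i, ⟪p.2 i - q.2 i, u.2 i - (p.2 i + u.2 i - q.2 i)⟫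
        = -‖p.2 i - q.2 i‖^2 := by
      intro i
      have e2 : u.2 i - (p.2 i + u.2 i - q.2 i) = -(p.2 i - q.2 i) := by abel
      rw [e2, inner_neg_right, real_inner_self_eq_norm_sq]
    rw [h1, Finset.sum_congr rfl (fun i _ => h2 i), Finset.sum_neg_distrib] at h0
    have hsnn : ∀ i ∈ Finset.univ, (0:ℝ) ≤ ‖p.2 i - q.2 i‖^2 := fun i _ => sq_nonneg _
    have hsum0 : (0:ℝ) ≤ ∑ i, ‖p.2 i - q.2 i‖^2 := Finset.sum_nonneg hsnn
    have h3 : ∑ i, ‖p.2 i - q.2 i‖^2 = 0 := by nlinarith [sq_nonneg ‖p.1 - q.1‖]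
    have h5 : ‖p.1 - q.1‖^2 = 0 := by nlinarith [sq_nonneg ‖p.1 - q.1‖]
    have hp1 : q.1 = p.1 := by
      have h6 : ‖p.1 - q.1‖ = 0 := by
        have := sq_eq_zero_iff.1 h5
        exact this
      rw [norm_eq_zero, sub_eq_zero] at h6
      exact h6.symm
    have hp2 : ∀ i, q.2 i = p.2 i := by
      intro i
      have h6 := (Finset.sum_eq_zero_iff_of_nonneg hsnn).1 h3 i (Finset.mem_univ i)
      have h7 : ‖p.2 i - q.2 i‖ = 0 := sq_eq_zero_iff.1 h6
      rw [norm_eq_zero, sub_eq_zero] at h7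
      exact h7.symm
    have hqp : q = p := Prod.ext hp1 (funext hp2)
    rw [hqp] at hq'
    have hvu : ((p.1 + u.1 - p.1, fun i => p.2 i + u.2 i - p.2 i) : H × (∀ i, G i)) = u := by
      refine Prod.ext ?_ (funext fun i => ?_) <;> simp
    rwa [hvu] at hq'
  funext p
  exact Set.Subset.antisymm (hsub p) (hsup p)
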